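/- arXiv:1601.03191 — 2 statements merged into one kernel-verified Lean document; each statement's English description precedes it below -/
import Mathlib

section
/- For J, K ∈ P_f(R), one has J ∼ K if and only if the subgroups ⟨J⟩ and ⟨K⟩ of W generated by J and by K are equal. -/
open scoped Classical

noncomputable section

namespace CWpaper

variable {B : Type} {M : CoxeterMatrix B} {W : Type} [Group W] (cs : CoxeterSystem M W)
variable (k : Type) [CommRing k]

/-- The set of reflections of the Coxeter system, as a subtype. -/
abbrev Refl := {t : W // cs.IsReflection t}

/-- Index type for the generators of `C_W(u)`: `inl i` indexes `g` generators,
`inr t` indexes `e` generators. -/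
abbrev Gen := B ⊕ Refl cs

/-- The free-algebra generator corresponding to `g_s`. -/
def gf (i : B) : FreeAlgebra k (Gen cs) := FreeAlgebra.ι k (Sum.inl i)

/-- The free-algebra generator corresponding to `e_t`. -/
def ef (t : Refl cs) : FreeAlgebra k (Gen cs) := FreeAlgebra.ι k (Sum.inr t)

/-- A simple reflection, as a reflection. -/
def simpleR (i : B) : Refl cs := ⟨cs.simple i, cs.isReflection_simple i⟩

/-- Conjugate of a reflection by a group element. -/
def conjR (w : W) (t : Refl cs) : Refl cs := ⟨w * t.1 * w⁻¹, t.2.conj w⟩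

end CWpaper

theorem even_card_of_involution {α : Type*} (s : Finset α) (f : α → α)
    (hmem : ∀ a ∈ s, f a ∈ s) (hinv : ∀ a ∈ s, f (f a) = a) (hne : ∀ a ∈ s, f a ≠ a) :
    Even s.card := by
  classical
  generalize hn : s.card = n
  induction n using Nat.strong_induction_on generalizing s with
  | _ n ih =>
  rcases Finset.eq_empty_or_nonempty s with rfl | ⟨a, ha⟩
  · subst hn; simp
  · have hfa : f a ∈ s := hmem a ha
    have hnea : f a ≠ a := hne a ha
    set s' := (s.erase a).erase (f a) with hs'
    have hfa' : f a ∈ s.erase a := Finset.mem_erase.mpr ⟨hnea, hfa⟩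
    have hcard' : s'.card + 1 + 1 = s.card := by
      rw [hs', Finset.card_erase_of_mem hfa', Finset.card_erase_of_mem ha]
      have h1 : 1 ≤ s.card := Finset.card_pos.mpr ⟨a, ha⟩
      have h2 : 1 ≤ (s.erase a).card := Finset.card_pos.mpr ⟨f a, hfa'⟩
      rw [Finset.card_erase_of_mem ha] at h2
      omega
    have hmem' : ∀ b ∈ s', b ∈ s ∧ b ≠ a ∧ b ≠ f a := by
      intro b hb
      rw [hs', Finset.mem_erase, Finset.mem_erase] at hb
      exact ⟨hb.2.2, hb.2.1, hb.1⟩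
    have hsub : ∀ b ∈ s', f b ∈ s' := by
      intro b hb
      obtain ⟨hbs, hba, hbfa⟩ := hmem' b hb
      rw [hs', Finset.mem_erase, Finset.mem_erase]
      refine ⟨?_, ?_, hmem b hbs⟩
      · intro h; exact hba (by rw [← hinv b hbs, h, hinv a ha])
      · intro h; exact hbfa (by rw [← hinv b hbs, h])
    have hEven' : Even s'.card := by
      refine ih s'.card ?_ s' hsub (fun b hb => hinv b (hmem' b hb).1)
        (fun b hb => hne b (hmem' b hb).1) rfl
      omega
    have hE2 : Even (s'.card + 1 + 1) := by
      obtain ⟨k, hk⟩ := hEven'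
      exact ⟨k + 1, by omega⟩
    rw [hcard'] at hE2
    rwa [hn] at hE2

namespace CWpaper

variable {B : Type} {M : CoxeterMatrix B} {W : Type} [Group W] (cs : CoxeterSystem M W)
variable (k : Type) [CommRing k]

theorem conjR_coe (w : W) (t : Refl cs) : (conjR cs w t : W) = w * (t : W) * w⁻¹ := rfl
theorem conjR_one (t : Refl cs) : conjR cs 1 t = t := Subtype.ext (by simp [conjR])
theorem conjR_mul (u v : W) (t : Refl cs) :
    conjR cs (u * v) t = conjR cs u (conjR cs v t) :=
  Subtype.ext (by simp [conjR, mul_assoc])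
theorem conjR_conjR_inv (u : W) (t : Refl cs) : conjR cs u (conjR cs u⁻¹ t) = t := by
  rw [← conjR_mul, mul_inv_cancel, conjR_one]
theorem conjR_inv_conjR (u : W) (t : Refl cs) : conjR cs u⁻¹ (conjR cs u t) = t := by
  rw [← conjR_mul, inv_mul_cancel, conjR_one]
theorem conjR_injective (u : W) : Function.Injective (conjR cs u) := by
  intro x y h
  have := congrArg (conjR cs u⁻¹) h
  rwa [conjR_inv_conjR, conjR_inv_conjR] at this
theorem conjR_simple_self (i : B) : conjR cs (cs.simple i) (simpleR cs i) = simpleR cs i :=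
  Subtype.ext (by simp [conjR, simpleR, mul_assoc])
theorem conjR_refl_self (r : Refl cs) : conjR cs (r : W) r = r :=
  Subtype.ext (by
    show (r : W) * r * (r : W)⁻¹ = r
    rw [CoxeterSystem.IsReflection.inv r.2, r.2.mul_self, one_mul])

def fPerm (i : B) : Equiv.Perm (Refl cs × ZMod 2) :=
  Function.Involutive.toPerm
    (fun p => (conjR cs (cs.simple i) p.1, p.2 + if p.1 = simpleR cs i then 1 else 0))
    (by
      intro p
      have hiff : ∀ x : Refl cs, conjR cs (cs.simple i) x = simpleR cs i ↔ x = simpleR cs i := by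
        intro x
        constructor
        · intro h
          have := congrArg (conjR cs (cs.simple i)) h
          rw [conjR_simple_self] at this
          rw [← this, ← conjR_mul, cs.simple_mul_simple_self, conjR_one]
        · rintro rfl; exact conjR_simple_self cs i
      ext
      · show ((conjR cs (cs.simple i) (conjR cs (cs.simple i) p.1)) : W) = (p.1 : W)
        rw [← conjR_mul, cs.simple_mul_simple_self, conjR_one]
      · show p.2 + (if p.1 = simpleR cs i then 1 else 0)
            + (if conjR cs (cs.simple i) p.1 = simpleR cs i then 1 else 0) = p.2
        by_cases h : p.1 = simpleR cs i
        · rw [if_pos h, if_pos ((hiff p.1).mpr h), add_assoc]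
          rw [show (1 + 1 : ZMod 2) = 0 from rfl, add_zero]
        · rw [if_neg h, if_neg (fun hh => h ((hiff p.1).mp hh))]
          simp)
theorem fPerm_apply (i : B) (x : Refl cs) (ε : ZMod 2) :
    fPerm cs i (x, ε) = (conjR cs (cs.simple i) x, ε + if x = simpleR cs i then 1 else 0) := rfl

-- ===== chunk 2 : liftability =====

theorem shiftIff (u : W) (y z : Refl cs) : conjR cs u y = z ↔ y = conjR cs u⁻¹ z := by
  constructor
  · rintro rfl; rw [conjR_inv_conjR]
  · rintro rfl; rw [conjR_conjR_inv]

theorem fPerm_liftable : M.IsLiftable (fPerm cs) := by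
  intro i j
  show (fPerm cs i * fPerm cs j) ^ M i j = 1
  set m := M i j with hm
  rcases Nat.eq_zero_or_pos m with h0 | hpos
  · rw [h0, pow_zero]
  haveI : NeZero m := ⟨hpos.ne'⟩
  set c : W := cs.simple i * cs.simple j with hcdef
  have hc : c ^ m = 1 := cs.simple_mul_simple_pow i j
  have hcinv : c⁻¹ = cs.simple j * cs.simple i := by
    rw [hcdef, mul_inv_rev, cs.inv_simple, cs.inv_simple]
  have hsc : cs.simple j * c * cs.simple j = c⁻¹ := by
    rw [hcdef, hcinv, ← mul_assoc, mul_assoc (cs.simple j * cs.simple i),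
      cs.simple_mul_simple_self, mul_one]
  have hscn : ∀ n : ℕ, cs.simple j * c ^ n * cs.simple j = (c ^ n)⁻¹ := by
    intro n
    have h1 : (cs.simple j * c * (cs.simple j)⁻¹) ^ n = cs.simple j * c ^ n * (cs.simple j)⁻¹ :=
      conj_pow
    rw [cs.inv_simple, hsc, inv_pow] at h1
    rw [← h1]
  -- the cyclic group map
  set Cz : ZMod m → W := fun z => c ^ z.val with hCzdef
  have hCnat : ∀ n : ℕ, Cz (n : ZMod m) = c ^ n := by
    intro n
    show c ^ (ZMod.val _) = _
    rw [ZMod.val_natCast]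
    exact (pow_eq_pow_mod n hc).symm
  have hCadd : ∀ y z : ZMod m, Cz (y + z) = Cz y * Cz z := by
    intro y z
    show c ^ _ = c ^ _ * c ^ _
    rw [ZMod.val_add, ← pow_add]
    exact (pow_eq_pow_mod _ hc).symm
  have hC0 : Cz 0 = 1 := by
    show c ^ _ = 1
    rw [ZMod.val_zero, pow_zero]
  have hflip : ∀ z, cs.simple j * Cz z = (Cz z)⁻¹ * cs.simple j := by
    intro z
    have h1 := hscn (z.val)
    calc cs.simple j * Cz z = (cs.simple j * Cz z * cs.simple j) * cs.simple j := by
          rw [mul_assoc, cs.simple_mul_simple_self, mul_one]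
      _ = (Cz z)⁻¹ * cs.simple j := by rw [show cs.simple j * Cz z * cs.simple j = (Cz z)⁻¹ from h1]
  have hCcomm : ∀ y z, Cz y * Cz z = Cz z * Cz y := by
    intro y z; exact pow_mul_comm c _ _
  have hCcommc : ∀ z, (Cz z)⁻¹ * c⁻¹ = c⁻¹ * (Cz z)⁻¹ := by
    intro z
    rw [← mul_inv_rev, ← mul_inv_rev]
    congr 1
    show c * Cz z = Cz z * c
    have h2 := pow_mul_comm c 1 z.val
    rwa [pow_one] at h2
  -- the two families of reflections
  set Q : Refl cs := conjR cs (cs.simple j) (simpleR cs i) with hQdef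
  have hQval : (Q : W) = c⁻¹ * cs.simple j := by
    show cs.simple j * cs.simple i * (cs.simple j)⁻¹ = _
    rw [cs.inv_simple, hcinv, mul_assoc]
  set Az : ZMod m → Refl cs := fun z => conjR cs (Cz z)⁻¹ (simpleR cs j) with hAzdef
  set Pz : ZMod m → Refl cs := fun z => conjR cs (Cz z)⁻¹ Q with hPzdef
  have haux : ∀ z, (Cz z)⁻¹ * cs.simple j * Cz z = (Cz (z+z))⁻¹ * cs.simple j := by
    intro z
    rw [mul_assoc, hflip z, ← mul_assoc, ← mul_inv_rev, ← hCadd]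
  have hAval : ∀ z, (Az z : W) = (Cz (z + z))⁻¹ * cs.simple j := by
    intro z
    show (Cz z)⁻¹ * cs.simple j * ((Cz z)⁻¹)⁻¹ = _
    rw [inv_inv]
    exact haux z
  have hPval : ∀ z, (Pz z : W) = (Cz (z + z) * c)⁻¹ * cs.simple j := by
    intro z
    show (Cz z)⁻¹ * (Q : W) * ((Cz z)⁻¹)⁻¹ = _
    rw [inv_inv, hQval, ← mul_assoc, hCcommc z, mul_assoc c⁻¹, mul_assoc c⁻¹, haux z,
      mul_inv_rev (Cz (z+z)) c, mul_assoc]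
  -- the ℕ-indexed versions and the action formula
  set An : ℕ → Refl cs := fun n => conjR cs (c ^ n)⁻¹ (simpleR cs j) with hAndef
  set Pn : ℕ → Refl cs := fun n => conjR cs ((c ^ n)⁻¹ * cs.simple j) (simpleR cs i) with hPndef
  have hAnz : ∀ n : ℕ, An n = Az (n : ZMod m) := by
    intro n
    show conjR cs (c ^ n)⁻¹ (simpleR cs j) = conjR cs (Cz (n : ZMod m))⁻¹ (simpleR cs j)
    rw [hCnat]
  have hPnz : ∀ n : ℕ, Pn n = Pz (n : ZMod m) := by
    intro n
    show conjR cs ((c ^ n)⁻¹ * cs.simple j) (simpleR cs i)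
        = conjR cs (Cz (n : ZMod m))⁻¹ (conjR cs (cs.simple j) (simpleR cs i))
    rw [conjR_mul, hCnat]
  have act : ∀ (k : ℕ) (x : Refl cs) (ε : ZMod 2),
      ((fPerm cs i * fPerm cs j) ^ k) (x, ε)
        = (conjR cs (c ^ k) x,
           ε + ∑ n ∈ Finset.range k,
             ((if x = An n then (1 : ZMod 2) else 0) + (if x = Pn n then 1 else 0))) := by
    intro k
    induction k with
    | zero =>
      intro x ε
      rw [pow_zero, Equiv.Perm.one_apply, pow_zero, conjR_one, Finset.range_zero,
        Finset.sum_empty, add_zero]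
    | succ k ihk =>
      intro x ε
      rw [pow_succ, Equiv.Perm.mul_apply]
      have e1 : (x = simpleR cs j) ↔ (x = An 0) := by
        have : An 0 = simpleR cs j := by
          show conjR cs (c ^ 0)⁻¹ (simpleR cs j) = simpleR cs j
          rw [pow_zero, inv_one, conjR_one]
        rw [this]
      have e2 : (conjR cs (cs.simple j) x = simpleR cs i) ↔ (x = Pn 0) := by
        have : Pn 0 = conjR cs (cs.simple j) (simpleR cs i) := by
          show conjR cs ((c ^ 0)⁻¹ * cs.simple j) (simpleR cs i) = _
          rw [pow_zero, inv_one, one_mul]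
        rw [this, shiftIff, cs.inv_simple]
      have hg : (fPerm cs i * fPerm cs j) (x, ε)
          = (conjR cs c x, ε + ((if x = An 0 then (1:ZMod 2) else 0)
              + (if x = Pn 0 then 1 else 0))) := by
        rw [Equiv.Perm.mul_apply, fPerm_apply, fPerm_apply, ← conjR_mul, ← hcdef,
          if_congr e1 rfl rfl, if_congr e2 rfl rfl, add_assoc]
      rw [hg, ihk]
      have hA : ∀ n, (conjR cs c x = An n) ↔ (x = An (n + 1)) := by
        intro n
        rw [shiftIff]
        show _ ↔ (x = conjR cs (c ^ (n+1))⁻¹ (simpleR cs j))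
        rw [show (c ^ (n+1))⁻¹ = c⁻¹ * (c ^ n)⁻¹ by rw [← mul_inv_rev, ← pow_succ], conjR_mul]
      have hP : ∀ n, (conjR cs c x = Pn n) ↔ (x = Pn (n + 1)) := by
        intro n
        rw [shiftIff]
        show _ ↔ (x = conjR cs ((c ^ (n+1))⁻¹ * cs.simple j) (simpleR cs i))
        rw [show (c ^ (n+1))⁻¹ * cs.simple j = c⁻¹ * ((c ^ n)⁻¹ * cs.simple j) by
          rw [← mul_assoc, ← mul_inv_rev, ← pow_succ], conjR_mul]
      have hfst : conjR cs (c ^ k) (conjR cs c x) = conjR cs (c ^ (k+1)) x := by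
        rw [← conjR_mul, ← pow_succ]
      rw [hfst]
      congr 1
      rw [Finset.sum_range_succ']
      have hcg : ∀ n ∈ Finset.range k,
          ((if conjR cs c x = An n then (1 : ZMod 2) else 0)
            + (if conjR cs c x = Pn n then 1 else 0))
          = ((if x = An (n+1) then (1 : ZMod 2) else 0) + (if x = Pn (n+1) then 1 else 0)) := by
        intro n _
        rw [if_congr (hA n) rfl rfl, if_congr (hP n) rfl rfl]
      rw [Finset.sum_congr rfl hcg]
      abel
  -- finish : evaluate at k = m
  apply Equiv.ext
  rintro ⟨x, ε⟩
  have htwo : ∀ a : ZMod 2, a + a = 0 := by decide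
  have hconv : ∀ (g : ℕ → Refl cs) (gz : ZMod m → Refl cs), (∀ n : ℕ, g n = gz (n : ZMod m)) →
      ∑ n ∈ Finset.range m, (if x = g n then (1 : ZMod 2) else 0)
        = ∑ z : ZMod m, (if x = gz z then 1 else 0) := by
    intro g gz hgz
    refine Finset.sum_nbij' (fun n => (n : ZMod m)) (fun z => z.val) ?_ ?_ ?_ ?_ ?_
    · intro a _; exact Finset.mem_univ _
    · intro z _; exact Finset.mem_range.mpr (ZMod.val_lt z)
    · intro a ha; exact ZMod.val_cast_of_lt (Finset.mem_range.mp ha)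
    · intro z _; exact ZMod.natCast_rightInverse z
    · intro a _; rw [hgz a]
  have hsplit : ∑ n ∈ Finset.range m,
      ((if x = An n then (1 : ZMod 2) else 0) + (if x = Pn n then 1 else 0))
      = (∑ z : ZMod m, (if x = Az z then (1:ZMod 2) else 0))
        + (∑ z : ZMod m, (if x = Pz z then (1:ZMod 2) else 0)) := by
    rw [Finset.sum_add_distrib, hconv An Az hAnz, hconv Pn Pz hPnz]
  have hper : ∀ (h0 : ZMod m), h0 ≠ 0 → h0 + h0 = 0 →
      ∀ gz : ZMod m → Refl cs, (∀ z, gz (z + h0) = gz z) →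
        ∑ z : ZMod m, (if x = gz z then (1:ZMod 2) else 0) = 0 := by
    intro h0 hne hh0 gz hg
    have hcard : ∑ z : ZMod m, (if x = gz z then (1:ZMod 2) else 0)
        = ((Finset.univ.filter (fun z => x = gz z)).card : ZMod 2) := by
      rw [Finset.card_filter, Nat.cast_sum]
      apply Finset.sum_congr rfl
      intro z _
      split_ifs <;> simp
    rw [hcard]
    have hev2 : Even (Finset.univ.filter (fun z => x = gz z)).card := by
      apply even_card_of_involution _ (fun z => z + h0)
      · intro a ha
        simp only [Finset.mem_filter] at ha ⊢
        exact ⟨Finset.mem_univ _, by rw [hg]; exact ha.2⟩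
      · intro a _
        show a + h0 + h0 = a
        rw [add_assoc, hh0, add_zero]
      · intro a _ habs
        exact hne (by rwa [add_eq_left] at habs)
    obtain ⟨k, hk⟩ := hev2
    rw [hk, Nat.cast_add]
    exact htwo _
  suffices hS : ∑ n ∈ Finset.range m,
      ((if x = An n then (1:ZMod 2) else 0) + (if x = Pn n then 1 else 0)) = 0 by
    rw [act m x ε, Equiv.Perm.one_apply, hc, conjR_one, hS, add_zero]
  rw [hsplit]
  rcases Nat.even_or_odd m with hev | hod
  · -- m even
    obtain ⟨k, hk⟩ := hev
    have hm2 : m / 2 + m / 2 = m := by omega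
    set h0 : ZMod m := ((m / 2 : ℕ) : ZMod m) with hh0def
    have hh0 : h0 + h0 = 0 := by rw [hh0def, ← Nat.cast_add, hm2, ZMod.natCast_self]
    have hne : h0 ≠ 0 := by
      rw [hh0def]
      intro hc0
      have hdvd := (ZMod.natCast_eq_zero_iff _ _).mp hc0
      have h1 : m / 2 < m := Nat.div_lt_self hpos (by norm_num)
      have h2 : 0 < m / 2 := by omega
      exact absurd (Nat.le_of_dvd h2 hdvd) (by omega)
    have hAsh : ∀ z, Az (z + h0) = Az z := by
      intro z
      apply Subtype.ext
      rw [hAval, hAval,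
        show z + h0 + (z + h0) = z + z from by
          rw [show z + h0 + (z + h0) = z + z + (h0 + h0) from by abel, hh0, add_zero]]
    have hPsh : ∀ z, Pz (z + h0) = Pz z := by
      intro z
      apply Subtype.ext
      rw [hPval, hPval,
        show z + h0 + (z + h0) = z + z from by
          rw [show z + h0 + (z + h0) = z + z + (h0 + h0) from by abel, hh0, add_zero]]
    rw [hper h0 hne hh0 Az hAsh, hper h0 hne hh0 Pz hPsh, add_zero]
  · -- m odd
    set h0 : ZMod m := (((m+1) / 2 : ℕ) : ZMod m) with hh0def
    have hm2 : (m+1)/2 + (m+1)/2 = m + 1 := by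
      obtain ⟨k, hk⟩ := hod
      omega
    have hCzh2 : Cz (h0 + h0) = c := by
      rw [hh0def, ← Nat.cast_add, hm2, hCnat, pow_succ, hc, one_mul]
    have hPA : ∀ z, Pz z = Az (z + h0) := by
      intro z
      apply Subtype.ext
      rw [hPval, hAval,
        show z + h0 + (z + h0) = (z + z) + (h0 + h0) from by abel, hCadd (z+z) (h0+h0), hCzh2]
    have hsame : ∑ z : ZMod m, (if x = Pz z then (1:ZMod 2) else 0)
        = ∑ z : ZMod m, (if x = Az z then (1:ZMod 2) else 0) := by
      refine Fintype.sum_equiv (Equiv.addRight h0) _ _ ?_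
      intro z
      rw [hPA z]
      rfl
    rw [hsame, htwo]


/-- The sign-permutation representation. -/
def sigmaRep : W →* Equiv.Perm (Refl cs × ZMod 2) :=
  cs.lift ⟨fPerm cs, fPerm_liftable cs⟩

theorem sigmaRep_simple (i : B) : sigmaRep cs (cs.simple i) = fPerm cs i :=
  cs.lift_apply_simple (fPerm_liftable cs) i

/-- The reflection cocycle with values in `ZMod 2`. -/
def nu (w : W) (x : Refl cs) : ZMod 2 := (sigmaRep cs w (x, 0)).2

theorem sigmaRep_apply (w : W) (x : Refl cs) (ε : ZMod 2) :
    sigmaRep cs w (x, ε) = (conjR cs w x, ε + nu cs w x) := by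
  induction w using CoxeterSystem.simple_induction_left cs generalizing x ε with
  | one =>
    have h0 : ∀ (y : Refl cs) (δ : ZMod 2), sigmaRep cs 1 (y, δ) = (y, δ) := by
      intro y δ
      rw [map_one, Equiv.Perm.one_apply]
    rw [h0, show nu cs 1 x = 0 from congrArg Prod.snd (h0 x 0), add_zero, conjR_one]
  | mul_simple_left w i ih =>
    have key : ∀ (y : Refl cs) (δ : ZMod 2),
        sigmaRep cs (cs.simple i * w) (y, δ)
          = (conjR cs (cs.simple i * w) y,
              δ + (nu cs w y + if conjR cs w y = simpleR cs i then 1 else 0)) := by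
      intro y δ
      rw [map_mul, Equiv.Perm.mul_apply, ih, sigmaRep_simple, fPerm_apply, conjR_mul, add_assoc]
    rw [key x ε, show nu cs (cs.simple i * w) x
      = nu cs w x + if conjR cs w x = simpleR cs i then 1 else 0 from by
        have := key x 0
        rw [zero_add] at this
        exact congrArg Prod.snd this]

theorem nu_mul (u v : W) (x : Refl cs) :
    nu cs (u * v) x = nu cs v x + nu cs u (conjR cs v x) := by
  have h1 : sigmaRep cs (u * v) (x, 0) = (conjR cs (u*v) x, nu cs (u*v) x) := by
    rw [sigmaRep_apply, zero_add]
  have h2 : sigmaRep cs (u * v) (x, 0)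
      = (conjR cs u (conjR cs v x), nu cs v x + nu cs u (conjR cs v x)) := by
    rw [map_mul, Equiv.Perm.mul_apply, sigmaRep_apply cs v x 0, zero_add, sigmaRep_apply cs u]
  rw [h1] at h2
  exact congrArg Prod.snd h2

theorem nu_one (x : Refl cs) : nu cs 1 x = 0 := by
  have := nu_mul cs 1 1 x
  rw [one_mul, conjR_one] at this
  -- a = a + a  in ZMod 2 implies a = 0
  have h2 : ∀ a : ZMod 2, a = a + a → a = 0 := by decide
  exact h2 _ this

theorem nu_simple (i : B) (x : Refl cs) :
    nu cs (cs.simple i) x = if x = simpleR cs i then 1 else 0 := by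
  show (sigmaRep cs (cs.simple i) (x, 0)).2 = _
  rw [sigmaRep_simple, fPerm_apply, zero_add]

theorem nu_inv (u : W) (x : Refl cs) : nu cs u⁻¹ (conjR cs u x) = nu cs u x := by
  have := nu_mul cs u⁻¹ u x
  rw [inv_mul_cancel, nu_one] at this
  have h2 : ∀ a b : ZMod 2, 0 = a + b → b = a := by decide
  exact h2 _ _ this

theorem nu_expand (u v : W) (x : Refl cs) :
    nu cs (u * v * u⁻¹) (conjR cs u x) = nu cs u x + nu cs v x + nu cs u (conjR cs v x) := by
  rw [show u * v * u⁻¹ = u * (v * u⁻¹) from by rw [mul_assoc], nu_mul,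
    show conjR cs (v * u⁻¹) (conjR cs u x) = conjR cs v x from by
      rw [← conjR_mul, mul_assoc, inv_mul_cancel, mul_one],
    nu_mul, conjR_inv_conjR, nu_inv]

theorem nu_self (r : Refl cs) : nu cs (r : W) r = 1 := by
  obtain ⟨u, i, hui⟩ := r.2
  have hr : conjR cs u (simpleR cs i) = r := Subtype.ext hui.symm
  have := nu_expand cs u (cs.simple i) (simpleR cs i)
  rw [hr, conjR_simple_self, nu_simple, if_pos rfl, ← hui] at this
  rw [this]
  have h2 : ∀ a : ZMod 2, a + 1 + a = 1 := by decide
  exact h2 _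

theorem nu_conj_self (r : Refl cs) (x : Refl cs) :
    nu cs (r : W) (conjR cs (r : W) x) = nu cs (r : W) x := by
  have := nu_mul cs (r : W) (r : W) x
  rw [r.2.mul_self, nu_one] at this
  have h2 : ∀ a b : ZMod 2, 0 = a + b → b = a := by decide
  exact h2 _ _ this

theorem nu_commute (r x : Refl cs) (hc : (r : W) * x = (x : W) * r) (hne : x ≠ r) :
    nu cs (r : W) x = 0 := by
  obtain ⟨u, i, hui⟩ := r.2
  set y := conjR cs u⁻¹ x with hy
  have hx : x = conjR cs u y := by rw [hy, conjR_conjR_inv]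
  have hcomm : conjR cs (cs.simple i) y = y := by
    have h1 : conjR cs (r : W) x = x := Subtype.ext (by
      rw [conjR_coe, CoxeterSystem.IsReflection.inv r.2]
      rw [mul_assoc, ← hc, ← mul_assoc, r.2.mul_self, one_mul])
    have h2 : conjR cs (u * cs.simple i * u⁻¹) x = x := by rw [← hui]; exact h1
    rw [show u * cs.simple i * u⁻¹ = u * (cs.simple i * u⁻¹) from by rw [mul_assoc],
      conjR_mul, conjR_mul] at h2
    have h3 := congrArg (conjR cs u⁻¹) h2
    rw [conjR_inv_conjR] at h3
    exact h3
  have := nu_expand cs u (cs.simple i) y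
  rw [← hx, hcomm, ← hui] at this
  rw [this, nu_simple]
  have hyne : y ≠ simpleR cs i := by
    intro habs
    apply hne
    rw [hx, habs]
    exact Subtype.ext hui.symm
  rw [if_neg hyne]
  have h2 : ∀ a : ZMod 2, a + 0 + a = 0 := by decide
  exact h2 _

theorem nu_support_finite (w : W) : {x : Refl cs | nu cs w x ≠ 0}.Finite := by
  obtain ⟨ω, rfl⟩ := cs.wordProd_surjective w
  induction ω with
  | nil =>
    rw [CoxeterSystem.wordProd_nil]
    convert Set.finite_empty
    ext x
    simp [nu_one]
  | cons i ω ih =>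
    rw [CoxeterSystem.wordProd_cons]
    apply Set.Finite.subset (ih.union (Set.finite_singleton
      (conjR cs (cs.wordProd ω)⁻¹ (simpleR cs i))))
    intro x hx
    simp only [Set.mem_setOf_eq] at hx
    rw [nu_mul, nu_simple] at hx
    by_cases h1 : nu cs (cs.wordProd ω) x = 0
    · right
      rw [h1, zero_add] at hx
      have : conjR cs (cs.wordProd ω) x = simpleR cs i := by
        by_contra hh
        rw [if_neg hh] at hx
        exact hx rfl
      rw [show x = conjR cs (cs.wordProd ω)⁻¹ (simpleR cs i) from by
        rw [← this, conjR_inv_conjR]]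
      exact Set.mem_singleton _
    · left
      exact h1


theorem exists_conj_mem (J : Finset (Refl cs)) (t : Refl cs)
    (ht : (t : W) ∈ Subgroup.closure (Subtype.val '' (J : Set (Refl cs)))) :
    ∃ a ∈ J, ∃ v ∈ Subgroup.closure (Subtype.val '' (J : Set (Refl cs))),
      (a : W) = v * (t : W) * v⁻¹ := by
  classical
  set H := Subgroup.closure (Subtype.val '' (J : Set (Refl cs))) with hH
  set S : Set (Refl cs) := {x | (x : W) ∈ H ∧ ∃ v ∈ H, (x : W) = v * (t : W) * v⁻¹} with hSdef
  have hconjmemH : ∀ v : W, v ∈ H → ∀ x : Refl cs, ((conjR cs v x : W) ∈ H ↔ (x : W) ∈ H) := by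
    intro v hv x
    rw [conjR_coe]
    constructor
    · intro h
      have h2 := H.mul_mem (H.mul_mem (H.inv_mem hv) h) hv
      have h3 : v⁻¹ * (v * (x:W) * v⁻¹) * v = (x : W) := by group
      rwa [h3] at h2
    · intro h
      exact H.mul_mem (H.mul_mem hv h) (H.inv_mem hv)
  have hSconj : ∀ v : W, v ∈ H → ∀ x : Refl cs, (conjR cs v x ∈ S ↔ x ∈ S) := by
    intro v hv x
    constructor
    · rintro ⟨h1, w, hw, hwt⟩
      refine ⟨(hconjmemH v hv x).mp h1, v⁻¹ * w, H.mul_mem (H.inv_mem hv) hw, ?_⟩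
      rw [conjR_coe] at hwt
      have h3 : (x : W) = v⁻¹ * (v * (x:W) * v⁻¹) * v := by group
      rw [h3, hwt]
      group
    · rintro ⟨h1, w, hw, hwt⟩
      refine ⟨(hconjmemH v hv x).mpr h1, v * w, H.mul_mem hv hw, ?_⟩
      rw [conjR_coe, hwt]
      group
  set DS : W → Finset (Refl cs) :=
    fun w => (nu_support_finite cs w).toFinset.filter (fun x => x ∈ S) with hDS
  have hterm : ∀ (w : W) (x : Refl cs), x ∈ DS w ↔ (nu cs w x ≠ 0 ∧ x ∈ S) := by
    intro w x
    rw [hDS]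
    simp [Set.Finite.mem_toFinset]
  set φ : W → ZMod 2 := fun w => ((DS w).card : ZMod 2) with hφ
  have hne1 : ∀ a : ZMod 2, a ≠ 0 → a = 1 := by decide
  have hsum : ∀ (w : W) (F : Finset (Refl cs)), DS w ⊆ F →
      φ w = ∑ x ∈ F, (if x ∈ S then nu cs w x else 0) := by
    intro w F hF
    have hvanish : ∀ x ∈ F, x ∉ DS w → (if x ∈ S then nu cs w x else 0) = 0 := by
      intro x _ hx
      rw [hterm] at hx
      push_neg at hx
      by_cases hxS : x ∈ S
      · rw [if_pos hxS]
        by_contra hne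
        exact (hx hne) hxS
      · rw [if_neg hxS]
    rw [← Finset.sum_subset hF hvanish]
    show ((DS w).card : ZMod 2) = _
    rw [Finset.card_eq_sum_ones, Nat.cast_sum]
    apply Finset.sum_congr rfl
    intro x hx
    rw [hterm] at hx
    rw [if_pos hx.2, hne1 _ hx.1, Nat.cast_one]
  have hhom : ∀ u v : W, u ∈ H → v ∈ H → φ (u * v) = φ u + φ v := by
    intro u v hu hv
    set F : Finset (Refl cs) :=
      DS (u*v) ∪ DS v ∪ (DS u).image (fun x => conjR cs v⁻¹ x) with hF
    have hsub1 : DS (u*v) ⊆ F := by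
      intro x hx
      exact Finset.mem_union_left _ (Finset.mem_union_left _ hx)
    have hsub2 : DS v ⊆ F := by
      intro x hx
      exact Finset.mem_union_left _ (Finset.mem_union_right _ hx)
    have himg : DS u ⊆ F.image (fun x => conjR cs v x) := by
      intro x hx
      rw [Finset.mem_image]
      exact ⟨conjR cs v⁻¹ x,
        Finset.mem_union_right _ (Finset.mem_image_of_mem _ hx), conjR_conjR_inv cs v x⟩
    rw [hsum (u*v) F hsub1, hsum v F hsub2, hsum u _ himg]
    rw [Finset.sum_image (by intro a _ b _ h; exact conjR_injective cs v h)]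
    rw [← Finset.sum_add_distrib]
    apply Finset.sum_congr rfl
    intro x _
    by_cases hxS : x ∈ S
    · rw [if_pos hxS, if_pos hxS, if_pos ((hSconj v hv x).mpr hxS), nu_mul]
      exact add_comm _ _
    · rw [if_neg hxS, if_neg hxS, if_neg (fun h => hxS ((hSconj v hv x).mp h)), add_zero]
  have hone : φ 1 = 0 := by
    show ((DS 1).card : ZMod 2) = 0
    have hempty : DS 1 = ∅ := by
      ext x
      rw [hterm]
      simp [nu_one]
    rw [hempty]
    simp
  have hrefl : ∀ r : Refl cs, (r : W) ∈ H → φ (r : W) = if r ∈ S then 1 else 0 := by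
    intro r hrH
    have hstab : ∀ x ∈ DS (r:W), conjR cs (r:W) x ∈ DS (r:W) := by
      intro x hx
      rw [hterm] at hx ⊢
      exact ⟨by rw [nu_conj_self]; exact hx.1, (hSconj _ hrH x).mpr hx.2⟩
    have hinvol : ∀ x : Refl cs, conjR cs (r:W) (conjR cs (r:W) x) = x := by
      intro x
      rw [← conjR_mul, r.2.mul_self, conjR_one]
    have hfix : ∀ x ∈ DS (r:W), conjR cs (r:W) x = x → x = r := by
      intro x hx hcomm
      by_contra hne
      rw [hterm] at hx
      apply hx.1
      apply nu_commute cs r x ?_ hne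
      have h4 := congrArg (Subtype.val) hcomm
      rw [conjR_coe] at h4
      calc (r:W) * x = ((r:W) * x * (r:W)⁻¹) * (r:W) := by group
        _ = (x : W) * r := by rw [h4]
    by_cases hrS : r ∈ S
    · rw [if_pos hrS]
      have hrDS : r ∈ DS (r:W) := by
        rw [hterm, nu_self]
        exact ⟨one_ne_zero, hrS⟩
      have hev : Even ((DS (r:W)).erase r).card := by
        apply even_card_of_involution _ (fun x => conjR cs (r:W) x)
        · intro a haa
          rw [Finset.mem_erase] at haa ⊢
          refine ⟨?_, hstab a haa.2⟩
          intro habs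
          apply haa.1
          have h5 := congrArg (conjR cs (r:W)) habs
          rw [hinvol a, conjR_refl_self] at h5
          exact h5
        · intro a _; exact hinvol a
        · intro a haa habs
          exact (Finset.mem_erase.mp haa).1 (hfix a (Finset.mem_erase.mp haa).2 habs)
      obtain ⟨k, hk⟩ := hev
      have hcard : (DS (r:W)).card = k + k + 1 := by
        rw [← Finset.card_erase_add_one hrDS, hk]
      show ((DS (r:W)).card : ZMod 2) = 1
      rw [hcard]
      push_cast
      have htwo : ∀ a : ZMod 2, a + a + 1 = 1 := by decide
      exact htwo _
    · rw [if_neg hrS]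
      have hev : Even (DS (r:W)).card := by
        apply even_card_of_involution _ (fun x => conjR cs (r:W) x) hstab (fun a _ => hinvol a)
        intro a haa habs
        have := hfix a haa habs
        subst this
        exact hrS ((hterm _ a).mp haa).2
      obtain ⟨k, hk⟩ := hev
      show ((DS (r:W)).card : ZMod 2) = 0
      rw [hk]
      push_cast
      have htwo : ∀ a : ZMod 2, a + a = 0 := by decide
      exact htwo _
  -- decompose t as a product of elements of J
  have ht2 : (t : W) ∈ (Subgroup.closure (Subtype.val '' (J : Set (Refl cs)))).toSubmonoid := ht
  rw [Subgroup.closure_toSubmonoid] at ht2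
  obtain ⟨l, hl, hlprod⟩ := Submonoid.exists_list_of_mem_closure ht2
  have hlJ : ∀ y ∈ l, ∃ a : Refl cs, a ∈ J ∧ y = (a : W) := by
    intro y hy
    rcases hl y hy with h | h
    · obtain ⟨a, haJ, rfl⟩ := h
      exact ⟨a, by simpa using haJ, rfl⟩
    · rw [Set.mem_inv] at h
      obtain ⟨a, haJ, hae⟩ := h
      refine ⟨a, by simpa using haJ, ?_⟩
      rw [← inv_inv y, ← hae, CoxeterSystem.IsReflection.inv a.2]
  have hlH : ∀ y ∈ l, y ∈ H := by
    intro y hy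
    obtain ⟨a, haJ, rfl⟩ := hlJ y hy
    exact Subgroup.subset_closure ⟨a, by simpa using haJ, rfl⟩
  have hφt : φ (t : W) = 1 := by
    rw [hrefl t ht, if_pos ⟨ht, 1, H.one_mem, by group⟩]
  by_contra hcon
  push_neg at hcon
  have hallzero : ∀ y ∈ l, φ y = 0 := by
    intro y hy
    obtain ⟨a, haJ, rfl⟩ := hlJ y hy
    rw [hrefl a (hlH _ hy), if_neg ?_]
    rintro ⟨_, v, hvH, hva⟩
    exact (hcon a haJ) v hvH hva
  have hprod : ∀ l' : List W, (∀ y ∈ l', y ∈ H) → (∀ y ∈ l', φ y = 0) → φ l'.prod = 0 := by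
    intro l'
    induction l' with
    | nil =>
      intro _ _
      simpa using hone
    | cons y l' ih =>
      intro hH' hz
      rw [List.prod_cons,
        hhom y l'.prod (hH' y List.mem_cons_self)
          (list_prod_mem (fun x hx => hH' x (List.mem_cons_of_mem _ hx))),
        hz y List.mem_cons_self, ih (fun x hx => hH' x (List.mem_cons_of_mem _ hx))
          (fun x hx => hz x (List.mem_cons_of_mem _ hx)), add_zero]
  have hfinal := hprod l hlH hallzero
  rw [hlprod, hφt] at hfinal
  exact one_ne_zero hfinal


/-- Conjugation closure of a finite set of reflections. -/
inductive InAbar (J : Finset (Refl cs)) : Refl cs → Prop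
  | base {u : Refl cs} : u ∈ J → InAbar J u
  | conj {a u : Refl cs} : InAbar J a → InAbar J u → InAbar J (conjR cs (a : W) u)

theorem inAbar_conj_iff (J : Finset (Refl cs)) :
    ∀ v ∈ Subgroup.closure (Subtype.val '' (J : Set (Refl cs))),
      ∀ a x : Refl cs, (x : W) = v * (a : W) * v⁻¹ → (InAbar cs J a ↔ InAbar cs J x) := by
  intro v hv
  induction hv using Subgroup.closure_induction with
  | mem y hy =>
    obtain ⟨b, hbJ, rfl⟩ := hy
    intro a x hx
    have hbJ' : b ∈ J := by simpa using hbJ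
    have hxc : x = conjR cs (b : W) a := Subtype.ext hx
    constructor
    · intro ha
      rw [hxc]
      exact InAbar.conj (InAbar.base hbJ') ha
    · intro hxx
      have hac : a = conjR cs (b : W) x := by
        apply Subtype.ext
        rw [conjR_coe, hx]
        rw [CoxeterSystem.IsReflection.inv b.2]
        have hbb : (b:W) * b = 1 := b.2.mul_self
        calc (a : W) = ((b:W) * b) * a * ((b:W) * b) := by rw [hbb]; group
          _ = (b:W) * ((b:W) * a * (b:W)) * b := by group
      rw [hac]
      exact InAbar.conj (InAbar.base hbJ') hxx
  | one =>
    intro a x hx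
    have : x = a := Subtype.ext (by rw [hx]; group)
    rw [this]
  | mul u w hu hw ihu ihw =>
    intro a x hx
    have hmid : cs.IsReflection (w * (a:W) * w⁻¹) := a.2.conj w
    have h1 := ihw a ⟨w * (a:W) * w⁻¹, hmid⟩ rfl
    have h2 := ihu ⟨w * (a:W) * w⁻¹, hmid⟩ x (by rw [hx]; group)
    exact h1.trans h2
  | inv u hu ihu =>
    intro a x hx
    have := ihu x a (by rw [hx]; group)
    exact this.symm

theorem inAbar_of_mem_closure (J : Finset (Refl cs)) (t : Refl cs)
    (ht : (t : W) ∈ Subgroup.closure (Subtype.val '' (J : Set (Refl cs)))) :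
    InAbar cs J t := by
  obtain ⟨a, haJ, v, hv, hva⟩ := exists_conj_mem cs J t ht
  exact (inAbar_conj_iff cs J v hv t a hva).mpr (InAbar.base haJ)



/-- The defining relations of the algebra `C_W(u)`. -/
inductive CWrel (u : B → k) : FreeAlgebra k (Gen cs) → FreeAlgebra k (Gen cs) → Prop
  | braid (i j : B) (h : M i j ≠ 0) :
      CWrel u (((CoxeterSystem.alternatingWord i j (M i j)).map (gf cs k)).prod)
              (((CoxeterSystem.alternatingWord j i (M i j)).map (gf cs k)).prod)
  | idem (t : Refl cs) : CWrel u (ef cs k t * ef cs k t) (ef cs k t)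
  | comm (t₁ t₂ : Refl cs) : CWrel u (ef cs k t₁ * ef cs k t₂) (ef cs k t₂ * ef cs k t₁)
  | conj (t t₁ : Refl cs) :
      CWrel u (ef cs k t * ef cs k t₁) (ef cs k t * ef cs k (conjR cs t.1 t₁))
  | move (i : B) (t : Refl cs) :
      CWrel u (gf cs k i * ef cs k t) (ef cs k (conjR cs (cs.simple i) t) * gf cs k i)
  | quad (i : B) :
      CWrel u (gf cs k i * gf cs k i)
        (1 + algebraMap k _ (u i - 1) * ef cs k (simpleR cs i) * (1 + gf cs k i))

variable (u : B → k)

/-- The algebra `C_W(u)`. -/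
abbrev CW := RingQuot (CWrel cs k u)

/-- The generator `g_s` of `C_W(u)`. -/
def gCW (i : B) : CW cs k u := RingQuot.mkAlgHom k (CWrel cs k u) (gf cs k i)

/-- The generator `e_t` of `C_W(u)`. -/
def eCW (t : Refl cs) : CW cs k u := RingQuot.mkAlgHom k (CWrel cs k u) (ef cs k t)

theorem eCW_commute (t₁ t₂ : Refl cs) : Commute (eCW cs k u t₁) (eCW cs k u t₂) := by
  have h := RingQuot.mkAlgHom_rel k (CWrel.comm (cs := cs) (k := k) (u := u) t₁ t₂)
  simp only [map_mul] at h
  exact h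

/-- The product `e_J = ∏_{t ∈ J} e_t` for a finite set of reflections `J`. -/
def eJ (J : Finset (Refl cs)) : CW cs k u :=
  J.noncommProd (eCW cs k u) (fun t₁ _ t₂ _ _ => eCW_commute cs k u t₁ t₂)

/-- `gg : W → C_W(u)` is the family `(g_w)_{w ∈ W}` iff for every reduced word
`l` for `w`, `gg w` is the product of the `g_s`, `s ∈ l`. -/
def IsGFamily (gg : W → CW cs k u) : Prop :=
  ∀ l : List B, cs.IsReduced l → gg (cs.wordProd l) = (l.map (gCW cs k u)).prod

end CWpaper

namespace CWpaper

/-- The base relation generating `∼` on finite sets of reflections: `J ∼ J ∪ {sts}`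
whenever `s, t ∈ J`. -/
def simStep {B : Type} {M : CoxeterMatrix B} {W : Type} [Group W] (cs : CoxeterSystem M W)
    (J K : Finset (Refl cs)) : Prop :=
  ∃ s ∈ J, ∃ t ∈ J, K = insert (conjR cs (s : W) t) J

section AuxEqv

variable {B : Type} {M : CoxeterMatrix B} {W : Type} [Group W] (cs : CoxeterSystem M W)

theorem eqvGen_insert {J : Finset (Refl cs)} {t : Refl cs} (h : InAbar cs J t) :
    ∀ A : Finset (Refl cs), J ⊆ A → Relation.EqvGen (simStep cs) A (insert t A) := by
  induction h with
  | base hu =>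
    intro A hA
    rw [Finset.insert_eq_self.mpr (hA hu)]
    exact Relation.EqvGen.refl A
  | @conj a u ha hu iha ihu =>
    intro A hA
    have step1 := iha A hA
    have step2 := ihu (insert a A) (hA.trans (Finset.subset_insert _ _))
    have step3 : Relation.EqvGen (simStep cs) (insert u (insert a A))
        (insert (conjR cs (a : W) u) (insert u (insert a A))) :=
      Relation.EqvGen.rel _ _
        ⟨a, Finset.mem_insert_of_mem (Finset.mem_insert_self _ _), u,
          Finset.mem_insert_self _ _, rfl⟩
    have step4 := iha (insert (conjR cs (a : W) u) A)
      (hA.trans (Finset.subset_insert _ _))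
    have step5 := ihu (insert a (insert (conjR cs (a : W) u) A))
      ((hA.trans (Finset.subset_insert _ _)).trans (Finset.subset_insert _ _))
    have heq : insert u (insert a (insert (conjR cs (a : W) u) A))
        = insert (conjR cs (a : W) u) (insert u (insert a A)) := by
      ext z
      simp only [Finset.mem_insert]
      tauto
    refine Relation.EqvGen.trans _ _ _
      (Relation.EqvGen.trans _ _ _ (Relation.EqvGen.trans _ _ _ step1 step2) step3)
      (Relation.EqvGen.symm _ _ ?_)
    refine Relation.EqvGen.trans _ _ _ (Relation.EqvGen.trans _ _ _ step4 step5) ?_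
    rw [heq]
    exact Relation.EqvGen.refl _

theorem eqvGen_union (J K : Finset (Refl cs)) (h : ∀ t ∈ K, InAbar cs J t) :
    Relation.EqvGen (simStep cs) J (J ∪ K) := by
  classical
  induction K using Finset.induction with
  | empty =>
    rw [Finset.union_empty]
    exact Relation.EqvGen.refl J
  | @insert a K' hnot ih =>
    rw [Finset.union_insert]
    exact Relation.EqvGen.trans _ _ _
      (ih (fun t htK => h t (Finset.mem_insert_of_mem htK)))
      (eqvGen_insert cs (h a (Finset.mem_insert_self _ _)) (J ∪ K')
        Finset.subset_union_left)

end AuxEqv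

/-- For finite sets of reflections `J, K`, one has `J ∼ K` if and only if
`⟨J⟩ = ⟨K⟩`. -/
theorem statement1 {B : Type} {M : CoxeterMatrix B} {W : Type} [Group W]
    (cs : CoxeterSystem M W) (J K : Finset (Refl cs)) :
    Relation.EqvGen (simStep cs) J K ↔
      Subgroup.closure (Subtype.val '' (J : Set (Refl cs))) =
        Subgroup.closure (Subtype.val '' (K : Set (Refl cs))) := by

  constructor
  · intro h
    induction h with
    | rel X Y hstep =>
      obtain ⟨s, hs, u, hu, rfl⟩ := hstep
      apply le_antisymm
      · apply Subgroup.closure_mono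
        apply Set.image_mono
        intro z hz
        exact Finset.mem_insert_of_mem hz
      · rw [Subgroup.closure_le]
        rintro y ⟨z, hz, rfl⟩
        rcases Finset.mem_insert.mp hz with rfl | hzX
        · rw [conjR_coe]
          refine Subgroup.mul_mem _ (Subgroup.mul_mem _ ?_ ?_) (Subgroup.inv_mem _ ?_)
          · exact Subgroup.subset_closure ⟨s, by simpa using hs, rfl⟩
          · exact Subgroup.subset_closure ⟨u, by simpa using hu, rfl⟩
          · exact Subgroup.subset_closure ⟨s, by simpa using hs, rfl⟩
        · exact Subgroup.subset_closure ⟨z, by simpa using hzX, rfl⟩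
    | refl X => rfl
    | symm X Y _ ih => exact ih.symm
    | trans X Y Z _ _ ih1 ih2 => exact ih1.trans ih2
  · intro hcl
    have h1 : ∀ u ∈ K, InAbar cs J u := by
      intro u huK
      apply inAbar_of_mem_closure cs J u
      rw [hcl]
      exact Subgroup.subset_closure ⟨u, by simpa using huK, rfl⟩
    have h2 : ∀ u ∈ J, InAbar cs K u := by
      intro u huJ
      apply inAbar_of_mem_closure cs K u
      rw [← hcl]
      exact Subgroup.subset_closure ⟨u, by simpa using huJ, rfl⟩
    refine Relation.EqvGen.trans _ _ _ (eqvGen_union cs J K h1)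
      (Relation.EqvGen.symm _ _ ?_)
    have := eqvGen_union cs K J h2
    rwa [Finset.union_comm] at this


end CWpaper
end
end

section
/- For every m ≥ 2, in the algebra C_{A_m}(u) with u invertible in k, writing x₁ = g_{s₁} and x₂ = g_{s₂} (which are invertible, with g_s⁻¹ = g_s + (u⁻¹−1)e_s + (u⁻¹−1)e_s g_s), the following two identities hold: (i) x₁x₂x₁⁻¹ + x₁⁻¹x₂⁻¹x₁ + x₁x₂ + x₁⁻¹x₂⁻¹ + x₂x₁⁻¹ + x₂⁻¹x₁ = x₁x₂⁻¹x₁⁻¹ + x₁⁻¹x₂x₁ + x₁x₂⁻¹ + x₁⁻¹x₂ + x₂⁻¹x₁⁻¹ + x₂x₁; and (ii) x₁x₂⁻¹x₁ − x₂x₁⁻¹x₂ + u·(x₂⁻¹x₁x₂⁻¹ − x₁⁻¹x₂x₁⁻¹) = 0 (the specialization at {t₀,t₁} = {1,u} of Ishii's second relation). -/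
open scoped Classical

noncomputable section

namespace CWpaper


section Statement16Aux

variable {k A : Type} [CommRing k] [Ring A] [Algebra k A]

private theorem core (u : kˣ) (a b e f g : A)
    (hee : e*e = e) (hff : f*f = f) (hgg : g*g = g)
    (hfe : f*e = e*f) (hge : g*e = e*f) (heg : e*g = e*f) (hgf : g*f = e*f) (hfg : f*g = e*f)
    (hae : a*e = e*a) (haf : a*f = g*a) (hag : a*g = f*a)
    (hbf : b*f = f*b) (hbe : b*e = g*b) (hbg : b*g = e*b)
    (haa : a*a = 1 + ((u:k)-1) • e + ((u:k)-1) • (e*a))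
    (hbb : b*b = 1 + ((u:k)-1) • f + ((u:k)-1) • (f*b))
    (hbab : b*a*b = a*b*a)
    (A' B' : A)
    (hA' : A' = a + (((u⁻¹:kˣ):k)-1) • e + (((u⁻¹:kˣ):k)-1) • (e*a))
    (hB' : B' = b + (((u⁻¹:kˣ):k)-1) • f + (((u⁻¹:kˣ):k)-1) • (f*b)) :
    a * A' = 1 ∧ A' * a = 1 ∧ b * B' = 1 ∧ B' * b = 1 ∧
    (a * b * A' + A' * B' * a + a * b + A' * B' + b * A' + B' * a =
      a * B' * A' + A' * b * a + a * B' + A' * b + B' * A' + b * a) ∧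
    (a * B' * a - b * A' * b + (u : k) • (B' * a * B' - A' * b * A') = 0) := by
  have hu : (u:k) * ((u⁻¹:kˣ):k) = 1 := u.mul_inv
  have Cee : ∀ x : A, e*(e*x) = e*x := fun x => by rw [← mul_assoc, hee]
  have Cff : ∀ x : A, f*(f*x) = f*x := fun x => by rw [← mul_assoc, hff]
  have Cgg : ∀ x : A, g*(g*x) = g*x := fun x => by rw [← mul_assoc, hgg]
  have Cfe : ∀ x : A, f*(e*x) = e*(f*x) := fun x => by rw [← mul_assoc, hfe, mul_assoc]
  have Cge : ∀ x : A, g*(e*x) = e*(f*x) := fun x => by rw [← mul_assoc, hge, mul_assoc]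
  have Ceg : ∀ x : A, e*(g*x) = e*(f*x) := fun x => by rw [← mul_assoc, heg, mul_assoc]
  have Cgf : ∀ x : A, g*(f*x) = e*(f*x) := fun x => by rw [← mul_assoc, hgf, mul_assoc]
  have Cfg : ∀ x : A, f*(g*x) = e*(f*x) := fun x => by rw [← mul_assoc, hfg, mul_assoc]
  have Cae : ∀ x : A, a*(e*x) = e*(a*x) := fun x => by rw [← mul_assoc, hae, mul_assoc]
  have Caf : ∀ x : A, a*(f*x) = g*(a*x) := fun x => by rw [← mul_assoc, haf, mul_assoc]
  have Cag : ∀ x : A, a*(g*x) = f*(a*x) := fun x => by rw [← mul_assoc, hag, mul_assoc]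
  have Cbf : ∀ x : A, b*(f*x) = f*(b*x) := fun x => by rw [← mul_assoc, hbf, mul_assoc]
  have Cbe : ∀ x : A, b*(e*x) = g*(b*x) := fun x => by rw [← mul_assoc, hbe, mul_assoc]
  have Cbg : ∀ x : A, b*(g*x) = e*(b*x) := fun x => by rw [← mul_assoc, hbg, mul_assoc]
  have Caa : ∀ x : A, a*(a*x) = x + ((u:k)-1) • (e*x) + ((u:k)-1) • (e*(a*x)) := fun x => by
    rw [← mul_assoc, haa, add_mul, add_mul, one_mul, smul_mul_assoc, smul_mul_assoc, mul_assoc]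
  have Cbb : ∀ x : A, b*(b*x) = x + ((u:k)-1) • (f*x) + ((u:k)-1) • (f*(b*x)) := fun x => by
    rw [← mul_assoc, hbb, add_mul, add_mul, one_mul, smul_mul_assoc, smul_mul_assoc, mul_assoc]
  have Cbab : ∀ x : A, b*(a*(b*x)) = a*(b*(a*x)) := fun x => by
    simp only [← mul_assoc]; rw [hbab]
  have Pbab : b*(a*b) = a*(b*a) := by simp only [← mul_assoc]; rw [hbab]
  refine ⟨?_, ?_, ?_, ?_, ?_, ?_⟩
  · rw [hA']
    simp only [Cee, Cff, Cgg, Cfe, Cge, Ceg, Cgf, Cfg, Cae, Caf, Cag, Cbf, Cbe, Cbg, Caa, Cbb,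
      Cbab, Pbab, hee, hff, hgg, hfe, hge, heg, hgf, hfg, hae, haf, hag, hbf, hbe, hbg, haa, hbb, hbab,
      mul_add, add_mul, mul_one, one_mul, mul_smul_comm, smul_mul_assoc, smul_smul, mul_assoc]
    match_scalars <;> first | ring1 | linear_combination hu
  · rw [hA']
    simp only [Cee, Cff, Cgg, Cfe, Cge, Ceg, Cgf, Cfg, Cae, Caf, Cag, Cbf, Cbe, Cbg, Caa, Cbb,
      Cbab, Pbab, hee, hff, hgg, hfe, hge, heg, hgf, hfg, hae, haf, hag, hbf, hbe, hbg, haa, hbb, hbab,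
      mul_add, add_mul, mul_one, one_mul, mul_smul_comm, smul_mul_assoc, smul_smul, mul_assoc]
    match_scalars <;>
    first
      | ring1
      | linear_combination hu
      | linear_combination (-1 : k) * hu
      | linear_combination ((u⁻¹:kˣ):k) * hu
      | linear_combination (-((u⁻¹:kˣ):k)) * hu
      | linear_combination (1 - ((u⁻¹:kˣ):k)) * hu
      | linear_combination (((u⁻¹:kˣ):k) - 1) * hu
      | linear_combination (((u⁻¹:kˣ):k) * ((u⁻¹:kˣ):k)) * hu
      | linear_combination (((u⁻¹:kˣ):k) - ((u⁻¹:kˣ):k) * ((u⁻¹:kˣ):k)) * hu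
      | linear_combination (((u⁻¹:kˣ):k) * ((u⁻¹:kˣ):k) - ((u⁻¹:kˣ):k)) * hu
      | linear_combination ((u:k) - 1) * hu
      | linear_combination (1 - (u:k)) * hu
      | linear_combination ((u:k) * ((u⁻¹:kˣ):k) + 1) * hu
      | linear_combination (2 - ((u⁻¹:kˣ):k)) * hu
      | linear_combination (((u⁻¹:kˣ):k) - 2) * hu
      | linear_combination (((u⁻¹:kˣ):k) + 1) * hu
      | linear_combination (-((u⁻¹:kˣ):k) - 1) * hu
  · rw [hB']
    simp only [Cee, Cff, Cgg, Cfe, Cge, Ceg, Cgf, Cfg, Cae, Caf, Cag, Cbf, Cbe, Cbg, Caa, Cbb,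
      Cbab, Pbab, hee, hff, hgg, hfe, hge, heg, hgf, hfg, hae, haf, hag, hbf, hbe, hbg, haa, hbb, hbab,
      mul_add, add_mul, mul_one, one_mul, mul_smul_comm, smul_mul_assoc, smul_smul, mul_assoc]
    match_scalars <;>
    first
      | ring1
      | linear_combination hu
      | linear_combination (-1 : k) * hu
      | linear_combination ((u⁻¹:kˣ):k) * hu
      | linear_combination (-((u⁻¹:kˣ):k)) * hu
      | linear_combination (1 - ((u⁻¹:kˣ):k)) * hu
      | linear_combination (((u⁻¹:kˣ):k) - 1) * hu
      | linear_combination (((u⁻¹:kˣ):k) * ((u⁻¹:kˣ):k)) * hu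
      | linear_combination (((u⁻¹:kˣ):k) - ((u⁻¹:kˣ):k) * ((u⁻¹:kˣ):k)) * hu
      | linear_combination (((u⁻¹:kˣ):k) * ((u⁻¹:kˣ):k) - ((u⁻¹:kˣ):k)) * hu
      | linear_combination ((u:k) - 1) * hu
      | linear_combination (1 - (u:k)) * hu
      | linear_combination ((u:k) * ((u⁻¹:kˣ):k) + 1) * hu
      | linear_combination (2 - ((u⁻¹:kˣ):k)) * hu
      | linear_combination (((u⁻¹:kˣ):k) - 2) * hu
      | linear_combination (((u⁻¹:kˣ):k) + 1) * hu
      | linear_combination (-((u⁻¹:kˣ):k) - 1) * hu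
  · rw [hB']
    simp only [Cee, Cff, Cgg, Cfe, Cge, Ceg, Cgf, Cfg, Cae, Caf, Cag, Cbf, Cbe, Cbg, Caa, Cbb,
      Cbab, Pbab, hee, hff, hgg, hfe, hge, heg, hgf, hfg, hae, haf, hag, hbf, hbe, hbg, haa, hbb, hbab,
      mul_add, add_mul, mul_one, one_mul, mul_smul_comm, smul_mul_assoc, smul_smul, mul_assoc]
    match_scalars <;>
    first
      | ring1
      | linear_combination hu
      | linear_combination (-1 : k) * hu
      | linear_combination ((u⁻¹:kˣ):k) * hu
      | linear_combination (-((u⁻¹:kˣ):k)) * hu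
      | linear_combination (1 - ((u⁻¹:kˣ):k)) * hu
      | linear_combination (((u⁻¹:kˣ):k) - 1) * hu
      | linear_combination (((u⁻¹:kˣ):k) * ((u⁻¹:kˣ):k)) * hu
      | linear_combination (((u⁻¹:kˣ):k) - ((u⁻¹:kˣ):k) * ((u⁻¹:kˣ):k)) * hu
      | linear_combination (((u⁻¹:kˣ):k) * ((u⁻¹:kˣ):k) - ((u⁻¹:kˣ):k)) * hu
      | linear_combination ((u:k) - 1) * hu
      | linear_combination (1 - (u:k)) * hu
      | linear_combination ((u:k) * ((u⁻¹:kˣ):k) + 1) * hu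
      | linear_combination (2 - ((u⁻¹:kˣ):k)) * hu
      | linear_combination (((u⁻¹:kˣ):k) - 2) * hu
      | linear_combination (((u⁻¹:kˣ):k) + 1) * hu
      | linear_combination (-((u⁻¹:kˣ):k) - 1) * hu
  · rw [hA', hB']
    simp only [Cee, Cff, Cgg, Cfe, Cge, Ceg, Cgf, Cfg, Cae, Caf, Cag, Cbf, Cbe, Cbg, Caa, Cbb,
      Cbab, Pbab, hee, hff, hgg, hfe, hge, heg, hgf, hfg, hae, haf, hag, hbf, hbe, hbg, haa, hbb, hbab,
      mul_add, add_mul, mul_one, one_mul, mul_smul_comm, smul_mul_assoc, smul_smul, mul_assoc]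
    match_scalars <;>
    first
      | ring1
      | linear_combination hu
      | linear_combination (-1 : k) * hu
      | linear_combination ((u⁻¹:kˣ):k) * hu
      | linear_combination (-((u⁻¹:kˣ):k)) * hu
      | linear_combination (1 - ((u⁻¹:kˣ):k)) * hu
      | linear_combination (((u⁻¹:kˣ):k) - 1) * hu
      | linear_combination (((u⁻¹:kˣ):k) * ((u⁻¹:kˣ):k)) * hu
      | linear_combination (((u⁻¹:kˣ):k) - ((u⁻¹:kˣ):k) * ((u⁻¹:kˣ):k)) * hu
      | linear_combination (((u⁻¹:kˣ):k) * ((u⁻¹:kˣ):k) - ((u⁻¹:kˣ):k)) * hu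
      | linear_combination ((u:k) - 1) * hu
      | linear_combination (1 - (u:k)) * hu
      | linear_combination ((u:k) * ((u⁻¹:kˣ):k) + 1) * hu
      | linear_combination (2 - ((u⁻¹:kˣ):k)) * hu
      | linear_combination (((u⁻¹:kˣ):k) - 2) * hu
      | linear_combination (((u⁻¹:kˣ):k) + 1) * hu
      | linear_combination (-((u⁻¹:kˣ):k) - 1) * hu
  · rw [hA', hB']
    simp only [Cee, Cff, Cgg, Cfe, Cge, Ceg, Cgf, Cfg, Cae, Caf, Cag, Cbf, Cbe, Cbg, Caa, Cbb,
      Cbab, Pbab, hee, hff, hgg, hfe, hge, heg, hgf, hfg, hae, haf, hag, hbf, hbe, hbg, haa, hbb, hbab,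
      mul_add, add_mul, mul_one, one_mul, mul_smul_comm, smul_mul_assoc, smul_smul, mul_assoc]
    match_scalars <;>
    first
      | ring1
      | linear_combination hu
      | linear_combination (-1 : k) * hu
      | linear_combination ((u⁻¹:kˣ):k) * hu
      | linear_combination (-((u⁻¹:kˣ):k)) * hu
      | linear_combination (1 - ((u⁻¹:kˣ):k)) * hu
      | linear_combination (((u⁻¹:kˣ):k) - 1) * hu
      | linear_combination (((u⁻¹:kˣ):k) * ((u⁻¹:kˣ):k)) * hu
      | linear_combination (((u⁻¹:kˣ):k) - ((u⁻¹:kˣ):k) * ((u⁻¹:kˣ):k)) * hu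
      | linear_combination (((u⁻¹:kˣ):k) * ((u⁻¹:kˣ):k) - ((u⁻¹:kˣ):k)) * hu
      | linear_combination ((u:k) - 1) * hu
      | linear_combination (1 - (u:k)) * hu
      | linear_combination ((u:k) * ((u⁻¹:kˣ):k) + 1) * hu
      | linear_combination (2 - ((u⁻¹:kˣ):k)) * hu
      | linear_combination (((u⁻¹:kˣ):k) - 2) * hu
      | linear_combination (((u⁻¹:kˣ):k) + 1) * hu
      | linear_combination (-((u⁻¹:kˣ):k) - 1) * hu


end Statement16Aux

/-- **Statement 16.** In `C_{A_m}(u)` (`m ≥ 2`, `u` invertible), with `x₁ = g_{s₁}`,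
`x₂ = g_{s₂}` (invertible with inverse `g + (u⁻¹−1)e + (u⁻¹−1)eg`), Ishii's two relations
hold: the Links–Gould-type relation (i), and (ii)
`x₁x₂⁻¹x₁ − x₂x₁⁻¹x₂ + u(x₂⁻¹x₁x₂⁻¹ − x₁⁻¹x₂x₁⁻¹) = 0`. -/
theorem statement16 (m : ℕ) (hm : 2 ≤ m) {W : Type} [Group W]
    (cs : CoxeterSystem (CoxeterMatrix.Aₙ m) W) (k : Type) [CommRing k] (u : kˣ)
    (x₁ x₂ e₁ e₂ y₁ y₂ : CW cs k fun _ => (u : k))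
    (hx₁ : x₁ = gCW cs k (fun _ => (u : k)) ⟨0, by omega⟩)
    (hx₂ : x₂ = gCW cs k (fun _ => (u : k)) ⟨1, by omega⟩)
    (he₁ : e₁ = eCW cs k (fun _ => (u : k)) (simpleR cs ⟨0, by omega⟩))
    (he₂ : e₂ = eCW cs k (fun _ => (u : k)) (simpleR cs ⟨1, by omega⟩))
    (hy₁ : y₁ = x₁ + (((u⁻¹ : kˣ) : k) - 1) • e₁ + (((u⁻¹ : kˣ) : k) - 1) • (e₁ * x₁))
    (hy₂ : y₂ = x₂ + (((u⁻¹ : kˣ) : k) - 1) • e₂ + (((u⁻¹ : kˣ) : k) - 1) • (e₂ * x₂)) :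
    x₁ * y₁ = 1 ∧ y₁ * x₁ = 1 ∧ x₂ * y₂ = 1 ∧ y₂ * x₂ = 1 ∧
    (x₁ * x₂ * y₁ + y₁ * y₂ * x₁ + x₁ * x₂ + y₁ * y₂ + x₂ * y₁ + y₂ * x₁ =
      x₁ * y₂ * y₁ + y₁ * x₂ * x₁ + x₁ * y₂ + y₁ * x₂ + y₂ * y₁ + x₂ * x₁) ∧
    (x₁ * y₂ * x₁ - x₂ * y₁ * x₂ + (u : k) • (y₂ * x₁ * y₂ - y₁ * x₂ * y₁) = 0) := by
  classical
  subst hx₁ hx₂ he₁ he₂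
  have h0 : (0:ℕ) < m := by omega
  have h1 : (1:ℕ) < m := by omega
  set u' : Fin m → k := fun _ => (u : k) with hu'def
  set i0 : Fin m := ⟨0, h0⟩ with hi0
  set i1 : Fin m := ⟨1, h1⟩ with hi1
  set s0 : W := cs.simple i0 with hs0
  set s1 : W := cs.simple i1 with hs1
  -- basic relations in CW
  have hidem : ∀ t, eCW cs k u' t * eCW cs k u' t = eCW cs k u' t := fun t => by
    have h := RingQuot.mkAlgHom_rel k (CWrel.idem (cs := cs) (k := k) (u := u') t)
    simpa only [map_mul, eCW] using h
  have hcomm : ∀ t₁ t₂, eCW cs k u' t₁ * eCW cs k u' t₂ = eCW cs k u' t₂ * eCW cs k u' t₁ :=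
    fun t₁ t₂ => by
    have h := RingQuot.mkAlgHom_rel k (CWrel.comm (cs := cs) (k := k) (u := u') t₁ t₂)
    simpa only [map_mul, eCW] using h
  have hconj : ∀ t t₁, eCW cs k u' t * eCW cs k u' t₁ =
      eCW cs k u' t * eCW cs k u' (conjR cs t.1 t₁) := fun t t₁ => by
    have h := RingQuot.mkAlgHom_rel k (CWrel.conj (cs := cs) (k := k) (u := u') t t₁)
    simpa only [map_mul, eCW] using h
  have hmove : ∀ i t, gCW cs k u' i * eCW cs k u' t =
      eCW cs k u' (conjR cs (cs.simple i) t) * gCW cs k u' i := fun i t => by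
    have h := RingQuot.mkAlgHom_rel k (CWrel.move (cs := cs) (k := k) (u := u') i t)
    simpa only [map_mul, eCW, gCW] using h
  have hquad : ∀ i, gCW cs k u' i * gCW cs k u' i = 1 + ((u:k)-1) • eCW cs k u' (simpleR cs i)
      + ((u:k)-1) • (eCW cs k u' (simpleR cs i) * gCW cs k u' i) := fun i => by
    have h := RingQuot.mkAlgHom_rel k (CWrel.quad (cs := cs) (k := k) (u := u') i)
    simp only [map_add, map_mul, map_one, AlgHom.commutes] at h
    rw [show gCW cs k u' i * gCW cs k u' i =
      RingQuot.mkAlgHom k (CWrel cs k u') (gf cs k i) * RingQuot.mkAlgHom k (CWrel cs k u') (gf cs k i) from rfl, h]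
    rw [Algebra.smul_def, Algebra.smul_def]
    show (1:CW cs k u') + algebraMap k _ (u' i - 1) * _ * (1 + _) = _
    rw [mul_add, mul_one, mul_assoc]
    rw [add_assoc]
    rfl
  -- group-level facts
  have hs00 : s0 * s0 = 1 := by rw [hs0]; exact cs.simple_mul_simple_self i0
  have hs11 : s1 * s1 = 1 := by rw [hs1]; exact cs.simple_mul_simple_self i1
  have hinv0 : s0⁻¹ = s0 := by rw [hs0]; exact cs.inv_simple i0
  have hinv1 : s1⁻¹ = s1 := by rw [hs1]; exact cs.inv_simple i1
  have hC0 : ∀ x : W, s0 * (s0 * x) = x := fun x => by rw [← mul_assoc, hs00, one_mul]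
  have hC1 : ∀ x : W, s1 * (s1 * x) = x := fun x => by rw [← mul_assoc, hs11, one_mul]
  have hM3 : CoxeterMatrix.Aₙ m i0 i1 = 3 := by
    simp [CoxeterMatrix.Aₙ, CoxeterMatrix.A, hi0, hi1, Fin.ext_iff]
  have hbrW : s0 * (s1 * s0) = s1 * (s0 * s1) := by
    have h := cs.simple_mul_simple_pow i0 i1
    rw [hM3] at h
    rw [← hs0, ← hs1] at h
    have h' : (s0 * (s1 * s0)) * (s1 * (s0 * s1)) = 1 := by
      rw [show (s0 * s1) ^ 3 = ((s0 * s1) * (s0 * s1)) * (s0 * s1) by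
        rw [pow_succ, pow_succ, pow_one]] at h
      simpa only [mul_assoc] using h
    rw [mul_eq_one_iff_eq_inv] at h'
    rw [h']
    simp only [mul_inv_rev, hinv0, hinv1, mul_assoc]
  -- reflections
  set t0 : Refl cs := simpleR cs i0 with ht0
  set t1 : Refl cs := simpleR cs i1 with ht1
  set t2 : Refl cs := conjR cs s0 t1 with ht2
  have hc1 : conjR cs s0 t0 = t0 := by
    apply Subtype.ext
    show s0 * s0 * s0⁻¹ = s0
    rw [hinv0, hs00, one_mul]
  have hc2 : conjR cs s0 t2 = t1 := by
    apply Subtype.ext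
    show s0 * (s0 * s1 * s0⁻¹) * s0⁻¹ = s1
    rw [hinv0]
    simp only [mul_assoc, hC0, hs00, mul_one]
  have hc3 : conjR cs s1 t1 = t1 := by
    apply Subtype.ext
    show s1 * s1 * s1⁻¹ = s1
    rw [hinv1, hs11, one_mul]
  have hc4 : conjR cs s1 t0 = t2 := by
    apply Subtype.ext
    show s1 * s0 * s1⁻¹ = s0 * s1 * s0⁻¹
    rw [hinv0, hinv1]
    simp only [mul_assoc]
    exact hbrW.symm
  have hc5 : conjR cs s1 t2 = t0 := by
    apply Subtype.ext
    show s1 * (s0 * s1 * s0⁻¹) * s1⁻¹ = s0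
    rw [hinv0, hinv1]
    simp only [mul_assoc]
    rw [← hbrW]
    simp only [hC0, hC1]
  -- algebra elements
  set a : CW cs k u' := gCW cs k u' i0 with ha
  set b : CW cs k u' := gCW cs k u' i1 with hb
  set e : CW cs k u' := eCW cs k u' t0 with he
  set f : CW cs k u' := eCW cs k u' t1 with hf
  set g : CW cs k u' := eCW cs k u' t2 with hg
  -- braid in CW
  have hbab : b * a * b = a * b * a := by
    have hne : CoxeterMatrix.Aₙ m i0 i1 ≠ 0 := by rw [hM3]; norm_num
    have h := RingQuot.mkAlgHom_rel k (CWrel.braid (cs := cs) (k := k) (u := u') i0 i1 hne)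
    rw [hM3] at h
    simp only [CoxeterSystem.alternatingWord, List.concat, List.map, List.prod_cons,
      List.prod_nil, List.map_append, List.prod_append, map_mul, map_one, mul_one,
      List.map_nil] at h
    simpa only [ha, hb, gCW, mul_assoc] using h
  -- the seventeen rewriting hypotheses
  have hee : e * e = e := hidem t0
  have hff : f * f = f := hidem t1
  have hgg : g * g = g := hidem t2
  have hef_conj : e * g = e * f := by
    rw [he, hg, hf, hconj t0 t2]
    congr 1
    rw [show (t0 : Refl cs).1 = s0 from rfl, hc2]
  have hfg' : f * g = f * e := by
    rw [hf, hg, he, hconj t1 t2]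
    congr 1
    rw [show (t1 : Refl cs).1 = s1 from rfl, hc5]
  have hfe : f * e = e * f := hcomm t1 t0
  have hge : g * e = e * f := by rw [hcomm t2 t0]; exact hef_conj
  have heg : e * g = e * f := hef_conj
  have hfg : f * g = e * f := by rw [hfg', hfe]
  have hgf : g * f = e * f := by rw [hcomm t2 t1, hfg', hfe]
  have hae : a * e = e * a := by
    have h := hmove i0 t0
    rw [← hs0, hc1] at h
    exact h
  have haf : a * f = g * a := by
    have h := hmove i0 t1
    rw [← hs0, ← ht2] at h
    exact h
  have hag : a * g = f * a := by
    have h := hmove i0 t2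
    rw [← hs0, hc2] at h
    exact h
  have hbf : b * f = f * b := by
    have h := hmove i1 t1
    rw [← hs1, hc3] at h
    exact h
  have hbe : b * e = g * b := by
    have h := hmove i1 t0
    rw [← hs1, hc4] at h
    exact h
  have hbg : b * g = e * b := by
    have h := hmove i1 t2
    rw [← hs1, hc5] at h
    exact h
  have haa : a * a = 1 + ((u:k)-1) • e + ((u:k)-1) • (e * a) := hquad i0
  have hbb : b * b = 1 + ((u:k)-1) • f + ((u:k)-1) • (f * b) := hquad i1
  -- apply the core computation
  exact core u a b e f g hee hff hgg hfe hge heg hgf hfg hae haf hag hbf hbe hbg haa hbb hbab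
    _ _ hy₁ hy₂


end CWpaper
end
end
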